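/- Let A₁, A₂, A₃ be 2×2 unitary matrices. For i ≠ j, set m_{ij} = |Tr(Aᵢ†Aⱼ)|²/4. Suppose there exists a unit vector |τ⟩ ∈ ℂ² ⊗ ℂ² such that g₁ = |⟨τ|(A₁†A₂ ⊗ I)|τ⟩|², g₂ = |⟨τ|(A₂†A₃ ⊗ I)|τ⟩|², g₃ = |⟨τ|(A₃†A₁ ⊗ I)|τ⟩|² satisfy g₁+g₂+g₃ < 1 and (g₁+g₂+g₃−1)² ≥ 4g₁g₂g₃. Then m₁ = m_{12}, m₂ = m_{23}, m₃ = m_{31} also satisfy m₁+m₂+m₃ < 1 and (m₁+m₂+m₃−1)² ≥ 4m₁m₂m₃. -/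

import Mathlib

open Matrix Kronecker Complex

lemma qubit_overlap_ge (U : Matrix (Fin 2) (Fin 2) ℂ)
    (hU : U ∈ Matrix.unitaryGroup (Fin 2) ℂ)
    (τ : Fin 2 × Fin 2 → ℂ) (hτ : star τ ⬝ᵥ τ = 1) :
    (‖U.trace‖) ^ 2 / 4 ≤
      ‖star τ ⬝ᵥ ((U ⊗ₖ (1 : Matrix (Fin 2) (Fin 2) ℂ)).mulVec τ)‖ ^ 2 := by
  set ρ : Matrix (Fin 2) (Fin 2) ℂ :=
    Matrix.of (fun a b => ∑ k : Fin 2, τ (a, k) * star (τ (b, k))) with hρ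
  have hz : star τ ⬝ᵥ ((U ⊗ₖ (1 : Matrix (Fin 2) (Fin 2) ℂ)).mulVec τ) = (U * ρ).trace := by
    simp [hρ, dotProduct, Matrix.mulVec, Matrix.trace, Matrix.diag, Matrix.mul_apply,
      Matrix.kroneckerMap_apply, Fintype.sum_prod_type, Fin.sum_univ_two, Matrix.one_apply]
    ring
  have htrρ : ρ.trace = 1 := by
    have := hτ
    simp [dotProduct, Fintype.sum_prod_type, Fin.sum_univ_two] at this
    simp [hρ, Matrix.trace, Matrix.diag, Fin.sum_univ_two]
    linear_combination this
  have hρH : ρᴴ = ρ := by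
    ext a b
    simp [hρ, Matrix.conjTranspose_apply, Fin.sum_univ_two, mul_comm]
  -- Cayley-Hamilton for 2x2
  have hCH : U * U = U.trace • U - U.det • (1 : Matrix (Fin 2) (Fin 2) ℂ) := by
    ext i j
    fin_cases i <;> fin_cases j <;>
      simp [Matrix.mul_apply, Fin.sum_univ_two, Matrix.trace_fin_two, Matrix.det_fin_two,
        Matrix.one_apply] <;> ring
  have hUU : U * Uᴴ = 1 := by
    have := hU.2
    rwa [Matrix.star_eq_conjTranspose] at this
  have hmul : U * ρ = U.trace • ρ - U.det • (Uᴴ * ρ) := by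
    calc U * ρ = (U * U) * (Uᴴ * ρ) := by
          rw [← Matrix.mul_assoc, Matrix.mul_assoc U U Uᴴ, hUU, Matrix.mul_one]
      _ = U.trace • ρ - U.det • (Uᴴ * ρ) := by
          rw [hCH, Matrix.sub_mul, Matrix.smul_mul, Matrix.smul_mul,
            ← Matrix.mul_assoc U Uᴴ ρ, hUU, Matrix.one_mul, Matrix.one_mul]
  have hconj : (Uᴴ * ρ).trace = star ((U * ρ).trace) := by
    have : (Uᴴ * ρ) = (ρᴴ * U)ᴴ := by
      rw [Matrix.conjTranspose_mul, Matrix.conjTranspose_conjTranspose]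
    rw [this, Matrix.trace_conjTranspose, hρH, Matrix.trace_mul_comm]
  set z := (U * ρ).trace with hzdef
  have htr : z = U.trace - U.det * star z := by
    calc z = (U.trace • ρ - U.det • (Uᴴ * ρ)).trace := by rw [hzdef, hmul]
      _ = U.trace * ρ.trace - U.det * (Uᴴ * ρ).trace := by
          rw [Matrix.trace_sub, Matrix.trace_smul, Matrix.trace_smul]; simp
      _ = U.trace - U.det * star z := by rw [htrρ, hconj, mul_one]
  have hdet : ‖U.det‖ = 1 := by
    have h1 := hU.1
    rw [Matrix.star_eq_conjTranspose] at h1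
    have : star U.det * U.det = 1 := by
      have := congrArg Matrix.det h1
      rwa [Matrix.det_mul, Matrix.det_conjTranspose, Matrix.det_one] at this
    have h2 : Complex.normSq U.det = 1 := by
      have := this
      rw [Complex.star_def, ← Complex.normSq_eq_conj_mul_self] at this
      exact_mod_cast this
    have := Complex.sq_norm U.det
    nlinarith [norm_nonneg U.det]
  have hcle : ‖U.trace‖ ≤ 2 * ‖z‖ := by
    have : U.trace = z + U.det * star z := by linear_combination -htr
    calc ‖U.trace‖ = ‖z + U.det * star z‖ := by rw [this]
      _ ≤ ‖z‖ + ‖U.det * star z‖ := norm_add_le _ _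
      _ = ‖z‖ + ‖U.det‖ * ‖star z‖ := by rw [norm_mul]
      _ = 2 * ‖z‖ := by rw [hdet, Complex.star_def, Complex.norm_conj]; ring
  rw [hz]
  nlinarith [norm_nonneg U.trace, norm_nonneg z]

lemma unit_mem_conjT_mul {A B : Matrix (Fin 2) (Fin 2) ℂ}
    (hA : A ∈ Matrix.unitaryGroup (Fin 2) ℂ) (hB : B ∈ Matrix.unitaryGroup (Fin 2) ℂ) :
    Aᴴ * B ∈ Matrix.unitaryGroup (Fin 2) ℂ := by
  rw [← Matrix.star_eq_conjTranspose]
  exact mul_mem (Unitary.star_mem hA) hB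

theorem entangled_probe_implies_maxEntangled_probe
    (A₁ A₂ A₃ : Matrix (Fin 2) (Fin 2) ℂ)
    (hA₁ : A₁ ∈ Matrix.unitaryGroup (Fin 2) ℂ)
    (hA₂ : A₂ ∈ Matrix.unitaryGroup (Fin 2) ℂ)
    (hA₃ : A₃ ∈ Matrix.unitaryGroup (Fin 2) ℂ)
    (τ : Fin 2 × Fin 2 → ℂ) (hτ : star τ ⬝ᵥ τ = 1) :
    let g₁ := ‖star τ ⬝ᵥ (((A₁ᴴ * A₂) ⊗ₖ (1 : Matrix (Fin 2) (Fin 2) ℂ)).mulVec τ)‖ ^ 2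
    let g₂ := ‖star τ ⬝ᵥ (((A₂ᴴ * A₃) ⊗ₖ (1 : Matrix (Fin 2) (Fin 2) ℂ)).mulVec τ)‖ ^ 2
    let g₃ := ‖star τ ⬝ᵥ (((A₃ᴴ * A₁) ⊗ₖ (1 : Matrix (Fin 2) (Fin 2) ℂ)).mulVec τ)‖ ^ 2
    let m₁ := ‖(A₁ᴴ * A₂).trace‖ ^ 2 / 4
    let m₂ := ‖(A₂ᴴ * A₃).trace‖ ^ 2 / 4
    let m₃ := ‖(A₃ᴴ * A₁).trace‖ ^ 2 / 4
    g₁ + g₂ + g₃ < 1 → (g₁ + g₂ + g₃ - 1) ^ 2 ≥ 4 * g₁ * g₂ * g₃ →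
      m₁ + m₂ + m₃ < 1 ∧ (m₁ + m₂ + m₃ - 1) ^ 2 ≥ 4 * m₁ * m₂ * m₃ := by
  intro g₁ g₂ g₃ m₁ m₂ m₃ hsum hineq
  have h1 : m₁ ≤ g₁ := qubit_overlap_ge _ (unit_mem_conjT_mul hA₁ hA₂) τ hτ
  have h2 : m₂ ≤ g₂ := qubit_overlap_ge _ (unit_mem_conjT_mul hA₂ hA₃) τ hτ
  have h3 : m₃ ≤ g₃ := qubit_overlap_ge _ (unit_mem_conjT_mul hA₃ hA₁) τ hτ
  have hm1 : 0 ≤ m₁ := by positivity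
  have hm2 : 0 ≤ m₂ := by positivity
  have hm3 : 0 ≤ m₃ := by positivity
  constructor
  · linarith
  · nlinarith [mul_le_mul (mul_le_mul h1 h2 hm2 (hm1.trans h1)) h3 hm3
      (mul_nonneg (hm1.trans h1) (hm2.trans h2)), sq_nonneg (g₁+g₂+g₃-m₁-m₂-m₃)]
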